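/- Consider the trace regression model: n independent pairs (X_i, Y_i), i = 1,...,n, where each X_i is a random m1×m2 real matrix, Y_i is a real random variable, and E(Y_i | X_i) = tr(X_i^T A_0) for an unknown matrix A_0 ∈ R^{m1×m2}. Let 𝔸 ⊆ R^{m1×m2} be any set of matrices and let Â^λ be a minimizer over A ∈ 𝔸 of L_n(A) = ||A||²_{L2(Π)} − ⟨(2/n)Σ_{i=1}^n Y_i X_i, A⟩ + λ||A||₁. If λ ≥ 2||M||_∞, where M = (1/n)Σ_{i=1}^n (Y_i X_i − E(Y_i X_i)), then ||Â^λ − A_0||²_{L2(Π)} ≤ inf_{A ∈ 𝔸} [ ||A − A_0||²_{L2(Π)} + 2λ||A||₁ ]. -/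

import Mathlib

open MeasureTheory ProbabilityTheory Matrix Real
open scoped ENNReal NNReal BigOperators

noncomputable section

instance {m1 m2 : ℕ} : MeasurableSpace (Matrix (Fin m1) (Fin m2) ℝ) :=
  (inferInstance : MeasurableSpace (Fin m1 → Fin m2 → ℝ))

/-- Trace inner product `⟨A,B⟩ = tr(AᵀB)`. -/
def tip {m1 m2 : ℕ} (A B : Matrix (Fin m1) (Fin m2) ℝ) : ℝ := (Aᵀ * B).trace

/-- Frobenius norm `‖A‖₂`. -/
def frob {m1 m2 : ℕ} (A : Matrix (Fin m1) (Fin m2) ℝ) : ℝ :=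
  Real.sqrt (∑ i, ∑ j, (A i j) ^ 2)

/-- Singular values (unordered): square roots of the eigenvalues of `AᴴA`. -/
def sval {m1 m2 : ℕ} (A : Matrix (Fin m1) (Fin m2) ℝ) (j : Fin m2) : ℝ :=
  Real.sqrt ((show (Aᵀ * A).IsHermitian from by
    simpa using Matrix.isHermitian_conjTranspose_mul_self A).eigenvalues j)

/-- Nuclear norm `‖A‖₁`: sum of singular values. -/
def nuc {m1 m2 : ℕ} (A : Matrix (Fin m1) (Fin m2) ℝ) : ℝ := ∑ j, sval A j

/-- Operator (spectral) norm `‖A‖_∞`. -/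
def opnorm {m1 m2 : ℕ} (A : Matrix (Fin m1) (Fin m2) ℝ) : ℝ :=
  ‖LinearMap.toContinuousLinearMap (Matrix.toEuclideanLin A)‖

/-- Squared `L₂(Π)`-norm: `‖A‖²_{L₂(Π)} = (1/n) ∑ᵢ E⟨A, Xᵢ⟩²`. -/
def l2sq {Ω : Type*} [MeasurableSpace Ω] (μ : Measure Ω) {n m1 m2 : ℕ}
    (X : Fin n → Ω → Matrix (Fin m1) (Fin m2) ℝ) (A : Matrix (Fin m1) (Fin m2) ℝ) : ℝ :=
  (1 / (n : ℝ)) * ∑ i, ∫ ω, (tip A (X i ω)) ^ 2 ∂μ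

/-- The matrix `E(Yᵢ Xᵢ)` (entrywise expectation). -/
def meanYX {Ω : Type*} [MeasurableSpace Ω] (μ : Measure Ω) {n m1 m2 : ℕ}
    (X : Fin n → Ω → Matrix (Fin m1) (Fin m2) ℝ) (Y : Fin n → Ω → ℝ) (i : Fin n) :
    Matrix (Fin m1) (Fin m2) ℝ :=
  Matrix.of fun j k => ∫ ω, Y i ω * X i ω j k ∂μ

/-- The stochastic error matrix `M = (1/n) ∑ᵢ (Yᵢ Xᵢ − E(Yᵢ Xᵢ))`. -/
def errM {Ω : Type*} [MeasurableSpace Ω] (μ : Measure Ω) {n m1 m2 : ℕ}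
    (X : Fin n → Ω → Matrix (Fin m1) (Fin m2) ℝ) (Y : Fin n → Ω → ℝ) (ω : Ω) :
    Matrix (Fin m1) (Fin m2) ℝ :=
  (n : ℝ)⁻¹ • ∑ i, (Y i ω • X i ω - meanYX μ X Y i)

/-- The penalized objective `L_n(A) = ‖A‖²_{L₂(Π)} − ⟨(2/n)∑ᵢYᵢXᵢ, A⟩ + λ‖A‖₁`. -/
def Ln {Ω : Type*} [MeasurableSpace Ω] (μ : Measure Ω) {n m1 m2 : ℕ}
    (X : Fin n → Ω → Matrix (Fin m1) (Fin m2) ℝ) (Y : Fin n → Ω → ℝ) (lam : ℝ)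
    (A : Matrix (Fin m1) (Fin m2) ℝ) (ω : Ω) : ℝ :=
  l2sq μ X A - tip ((2 / (n : ℝ)) • ∑ i, Y i ω • X i ω) A + lam * nuc A

/-- Matrix of the orthogonal projection onto a subspace of `ℝ^d`. -/
def projMat {d : ℕ} (K : Submodule ℝ (EuclideanSpace ℝ (Fin d))) : Matrix (Fin d) (Fin d) ℝ :=
  Matrix.toEuclideanLin.symm (K.subtype ∘ₗ (K.orthogonalProjectionOnto).toLinearMap)

/-- Column space of `A` (the span of its left singular vectors `S₁`). -/
def colSpan {m1 m2 : ℕ} (A : Matrix (Fin m1) (Fin m2) ℝ) :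
    Submodule ℝ (EuclideanSpace ℝ (Fin m1)) := LinearMap.range (Matrix.toEuclideanLin A)

/-- Row space of `A` (the span of its right singular vectors `S₂`). -/
def rowSpan {m1 m2 : ℕ} (A : Matrix (Fin m1) (Fin m2) ℝ) :
    Submodule ℝ (EuclideanSpace ℝ (Fin m2)) := LinearMap.range (Matrix.toEuclideanLin Aᵀ)

/-- `𝒫_A^⊥(B) = P_{S₁ᗮ} B P_{S₂ᗮ}` where `(S₁, S₂)` is the support of `A`. -/
def Pperp {m1 m2 : ℕ} (A B : Matrix (Fin m1) (Fin m2) ℝ) : Matrix (Fin m1) (Fin m2) ℝ :=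
  projMat (colSpan A)ᗮ * B * projMat (rowSpan A)ᗮ

/-- `𝒫_A(B) = B - P_{S₁ᗮ} B P_{S₂ᗮ}`. -/
def calP {m1 m2 : ℕ} (A B : Matrix (Fin m1) (Fin m2) ℝ) : Matrix (Fin m1) (Fin m2) ℝ :=
  B - Pperp A B

/-- The uniform distribution on the matrix completion basis
`𝒳 = {eⱼ(m₁) eₖ(m₂)ᵀ}`. -/
def unifX (m1 m2 : ℕ) : Measure (Matrix (Fin m1) (Fin m2) ℝ) :=
  ((m1 * m2 : ℝ≥0∞))⁻¹ •
    ∑ j : Fin m1, ∑ k : Fin m2, Measure.dirac (Matrix.single j k (1 : ℝ))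

/-- The matrix `𝐗 = (m₁m₂/n) ∑ᵢ Yᵢ Xᵢ`. -/
def hatX {Ω : Type*} {n m1 m2 : ℕ} (X : Fin n → Ω → Matrix (Fin m1) (Fin m2) ℝ)
    (Y : Fin n → Ω → ℝ) (ω : Ω) : Matrix (Fin m1) (Fin m2) ℝ :=
  ((m1 * m2 : ℝ) / (n : ℝ)) • ∑ i, Y i ω • X i ω

/-- The matrix-completion objective `‖A − B‖₂² + λ m₁m₂ ‖A‖₁`. -/
def Fobj {m1 m2 : ℕ} (lam : ℝ) (B A : Matrix (Fin m1) (Fin m2) ℝ) : ℝ :=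
  frob (A - B) ^ 2 + lam * (m1 * m2 : ℝ) * nuc A

section Aux

variable {m1 m2 : ℕ}

lemma tip_eq_sum (A B : Matrix (Fin m1) (Fin m2) ℝ) :
    tip A B = ∑ j, ∑ k, A j k * B j k := by
  simp only [tip, Matrix.trace, Matrix.diag, Matrix.mul_apply, Matrix.transpose_apply]
  exact Finset.sum_comm

lemma tip_add_left (A B C : Matrix (Fin m1) (Fin m2) ℝ) :
    tip (A + B) C = tip A C + tip B C := by
  simp [tip_eq_sum, add_mul, Finset.sum_add_distrib]

lemma tip_sub_left (A B C : Matrix (Fin m1) (Fin m2) ℝ) :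
    tip (A - B) C = tip A C - tip B C := by
  simp [tip_eq_sum, sub_mul, Finset.sum_sub_distrib]

lemma tip_smul_left (c : ℝ) (A C : Matrix (Fin m1) (Fin m2) ℝ) :
    tip (c • A) C = c * tip A C := by
  simp [tip_eq_sum, Finset.mul_sum, mul_assoc]

lemma tip_neg_left (A C : Matrix (Fin m1) (Fin m2) ℝ) :
    tip (-A) C = - tip A C := by
  simp [tip_eq_sum, Finset.sum_neg_distrib]

lemma tip_sum_left {ι : Type*} (s : Finset ι) (f : ι → Matrix (Fin m1) (Fin m2) ℝ)
    (C : Matrix (Fin m1) (Fin m2) ℝ) :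
    tip (∑ i ∈ s, f i) C = ∑ i ∈ s, tip (f i) C := by
  unfold tip
  rw [Matrix.transpose_sum, Matrix.sum_mul, Matrix.trace_sum]

lemma nuc_nonneg (A : Matrix (Fin m1) (Fin m2) ℝ) : 0 ≤ nuc A :=
  Finset.sum_nonneg fun j _ => Real.sqrt_nonneg _

lemma opnorm_neg (M : Matrix (Fin m1) (Fin m2) ℝ) : opnorm (-M) = opnorm M := by
  unfold opnorm
  rw [map_neg, map_neg, norm_neg]

lemma tip_le_opnorm_mul_nuc (M B : Matrix (Fin m1) (Fin m2) ℝ) :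
    tip M B ≤ opnorm M * nuc B := by
  classical
  have hB : (Bᵀ * B).IsHermitian := by simpa using Matrix.isHermitian_conjTranspose_mul_self B
  set V : Matrix (Fin m2) (Fin m2) ℝ :=
    (Matrix.IsHermitian.eigenvectorUnitary hB : Matrix (Fin m2) (Fin m2) ℝ) with hVdef
  have hV1 : V * star V = 1 := Unitary.coe_mul_star_self _
  have hV2 : star V * V = 1 := Unitary.coe_star_mul_self _
  have hstarV : star V = Vᵀ := by
    rw [Matrix.star_eq_conjTranspose, Matrix.conjTranspose_eq_transpose_of_trivial]
  -- rewrite the trace in the eigenvector basis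
  have key : tip M B = ∑ j, ∑ i, (M * V) i j * (B * V) i j := by
    have h1 : tip M B = ((M * V)ᵀ * (B * V)).trace := by
      have : Mᵀ * B = Mᵀ * B * (V * star V) := by rw [hV1, Matrix.mul_one]
      calc tip M B = (Mᵀ * B * V * star V).trace := by
            rw [tip]
            conv_lhs => rw [this]
            rw [← Matrix.mul_assoc]
        _ = (star V * (Mᵀ * B * V)).trace := Matrix.trace_mul_comm _ _
        _ = ((M * V)ᵀ * (B * V)).trace := by
            rw [hstarV, Matrix.transpose_mul]
            congr 1
            simp only [Matrix.mul_assoc]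
    rw [h1, show ((M * V)ᵀ * (B * V)).trace = tip (M * V) (B * V) from rfl,
      tip_eq_sum (M * V) (B * V)]
    exact Finset.sum_comm
  have hcol : ∀ j, ∑ i, (M * V) i j * (B * V) i j ≤ opnorm M * sval B j := by
    intro j
    set v : EuclideanSpace ℝ (Fin m2) := (WithLp.equiv 2 (Fin m2 → ℝ)).symm (fun k => V k j)
      with hvdef
    set u : EuclideanSpace ℝ (Fin m1) := Matrix.toEuclideanLin M v with hudef
    set w : EuclideanSpace ℝ (Fin m1) := Matrix.toEuclideanLin B v with hwdef
    have hu : ∀ i, u i = (M * V) i j := by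
      intro i
      simp [hudef, hvdef, Matrix.toEuclideanLin_apply, Matrix.mulVec, dotProduct,
        Matrix.mul_apply]
    have hw : ∀ i, w i = (B * V) i j := by
      intro i
      simp [hwdef, hvdef, Matrix.toEuclideanLin_apply, Matrix.mulVec, dotProduct,
        Matrix.mul_apply]
    have hvnorm : ‖v‖ = 1 := by
      have h : ∑ k, V k j * V k j = 1 := by
        have h2 := congrArg (fun A => A j j) hV2
        simpa [Matrix.mul_apply, hstarV, Matrix.transpose_apply, Matrix.one_apply] using h2
      rw [EuclideanSpace.norm_eq]
      have : ∀ k, ‖v k‖ ^ 2 = V k j * V k j := by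
        intro k
        simp [hvdef, Real.norm_eq_abs, sq_abs, pow_two]
      rw [Finset.sum_congr rfl fun k _ => this k, h, Real.sqrt_one]
    have hwnorm : ‖w‖ = sval B j := by
      have hdiag := Matrix.IsHermitian.conjStarAlgAut_star_eigenvectorUnitary hB
      rw [Unitary.conjStarAlgAut_star_apply] at hdiag
      have h : ∑ i, (B * V) i j * (B * V) i j = hB.eigenvalues j := by
        have h3 : star V * (Bᴴ * B) * V = (B * V)ᴴ * (B * V) := by
          rw [Matrix.conjTranspose_mul]
          simp only [Matrix.star_eq_conjTranspose, Matrix.mul_assoc]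
        have h2 := congrArg (fun A => A j j) (h3.symm.trans hdiag)
        simpa [Matrix.mul_apply, Matrix.conjTranspose_apply, Matrix.diagonal_apply_eq,
          Function.comp, mul_comm] using h2
      rw [EuclideanSpace.norm_eq]
      have heq : ∀ i, ‖w i‖ ^ 2 = (B * V) i j * (B * V) i j := by
        intro i
        rw [hw i]
        simp [Real.norm_eq_abs, sq_abs, pow_two]
      rw [Finset.sum_congr rfl fun i _ => heq i, h, sval]
    have hunorm : ‖u‖ ≤ opnorm M * ‖v‖ := by
      have h := ContinuousLinearMap.le_opNorm
        (LinearMap.toContinuousLinearMap (Matrix.toEuclideanLin M)) v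
      simpa [opnorm, hudef] using h
    calc ∑ i, (M * V) i j * (B * V) i j = ∑ i, u i * w i := by
          exact Finset.sum_congr rfl fun i _ => by rw [hu i, hw i]
      _ = (inner ℝ u w : ℝ) := by
          rw [PiLp.inner_apply]
          exact Finset.sum_congr rfl fun i _ => by
            simp [RCLike.inner_apply, conj_trivial, mul_comm]
      _ ≤ ‖u‖ * ‖w‖ := real_inner_le_norm u w
      _ ≤ (opnorm M * ‖v‖) * ‖w‖ :=
          mul_le_mul_of_nonneg_right hunorm (norm_nonneg w)
      _ = opnorm M * sval B j := by rw [hvnorm, hwnorm, mul_one]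
  calc tip M B = ∑ j, ∑ i, (M * V) i j * (B * V) i j := key
    _ ≤ ∑ j, opnorm M * sval B j := Finset.sum_le_sum fun j _ => hcol j
    _ = opnorm M * nuc B := by rw [nuc, Finset.mul_sum]

end Aux

/-- Theorem 1, first oracle inequality: in the trace regression model, if
`λ ≥ 2‖M‖_∞` then the nuclear norm penalized estimator satisfies the "slow rate" sharp oracle
inequality `‖Â − A₀‖²_{L₂(Π)} ≤ inf_{A ∈ 𝔸} [‖A − A₀‖²_{L₂(Π)} + 2λ‖A‖₁]`. -/
theorem trace_regression_oracle_slow_rate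
    {Ω : Type*} [MeasurableSpace Ω] (μ : Measure Ω) [IsProbabilityMeasure μ]
    {n m1 m2 : ℕ} (hn : 0 < n)
    (X : Fin n → Ω → Matrix (Fin m1) (Fin m2) ℝ) (Y : Fin n → Ω → ℝ)
    (hXmeas : ∀ i, Measurable (X i)) (hYmeas : ∀ i, Measurable (Y i))
    -- the pairs (Xᵢ, Yᵢ) are independent
    (hindep : iIndepFun (fun i ω => (X i ω, Y i ω)) μ)
    (A0 : Matrix (Fin m1) (Fin m2) ℝ)
    -- the trace regression model: E(Yᵢ | Xᵢ) = tr(Xᵢᵀ A₀)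
    (hmodel : ∀ i, μ[Y i | MeasurableSpace.comap (X i) inferInstance]
        =ᵐ[μ] fun ω => tip A0 (X i ω))
    -- regularity: all expectations involved exist
    (hYint : ∀ i, Integrable (Y i) μ)
    (hYXint : ∀ i j k, Integrable (fun ω => Y i ω * X i ω j k) μ)
    (hA0Xint : ∀ i j k, Integrable (fun ω => tip A0 (X i ω) * X i ω j k) μ)
    (hL2int : ∀ (A : Matrix (Fin m1) (Fin m2) ℝ) (i : Fin n),
      Integrable (fun ω => (tip A (X i ω)) ^ 2) μ)
    (𝔸 : Set (Matrix (Fin m1) (Fin m2) ℝ)) (lam : ℝ)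
    (Ahat : Matrix (Fin m1) (Fin m2) ℝ) (ω : Ω)
    -- Â realizes the minimum of L_n over 𝔸 (at the observed data ω)
    (hAhatmem : Ahat ∈ 𝔸)
    (hAhatmin : ∀ A ∈ 𝔸, Ln μ X Y lam Ahat ω ≤ Ln μ X Y lam A ω)
    -- λ ≥ 2‖M‖_∞
    (hlam : 2 * opnorm (errM μ X Y ω) ≤ lam) :
    ∀ A ∈ 𝔸, l2sq μ X (Ahat - A0) ≤ l2sq μ X (A - A0) + 2 * lam * nuc A := by
  classical
  intro A hA
  set M : Matrix (Fin m1) (Fin m2) ℝ := errM μ X Y ω with hMdef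
  -- integrability of products of linear statistics
  have hprod : ∀ (C D : Matrix (Fin m1) (Fin m2) ℝ) (i : Fin n),
      Integrable (fun ω' => tip C (X i ω') * tip D (X i ω')) μ := by
    intro C D i
    have hformula : (fun ω' => tip C (X i ω') * tip D (X i ω'))
        = fun ω' => ((tip (C + D) (X i ω')) ^ 2 - (tip C (X i ω')) ^ 2
            - (tip D (X i ω')) ^ 2) / 2 := by
      funext ω'; rw [tip_add_left]; ring
    rw [hformula]
    exact (((hL2int (C + D) i).sub (hL2int C i)).sub (hL2int D i)).div_const 2
  -- the tower property: E(Yᵢ Xᵢ) = E(⟨A₀, Xᵢ⟩ Xᵢ)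
  have hmean : ∀ (i : Fin n) (j : Fin m1) (k : Fin m2),
      (∫ ω', Y i ω' * X i ω' j k ∂μ) = ∫ ω', tip A0 (X i ω') * X i ω' j k ∂μ := by
    intro i j k
    set m : MeasurableSpace Ω := MeasurableSpace.comap (X i) inferInstance with hmdef
    have hm : m ≤ _ := (hXmeas i).comap_le
    have hXm : Measurable[m] (X i) := Measurable.of_comap_le le_rfl
    have hfm : StronglyMeasurable[m] (fun ω' => X i ω' j k) := by
      have : Measurable[m] (fun ω' => X i ω' j k) :=
        ((measurable_pi_apply k).comp ((measurable_pi_apply j).comp hXm))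
      exact this.stronglyMeasurable
    have hfuneq : ((fun ω' => X i ω' j k) * (Y i)) = fun ω' => Y i ω' * X i ω' j k := by
      funext ω'; simp [mul_comm]
    have hint1 : Integrable ((fun ω' => X i ω' j k) * (Y i)) μ := by
      rw [hfuneq]; exact hYXint i j k
    have h1 := condExp_mul_of_stronglyMeasurable_left hfm hint1 (hYint i)
    calc ∫ ω', Y i ω' * X i ω' j k ∂μ
        = ∫ ω', ((fun ω' => X i ω' j k) * Y i) ω' ∂μ := by rw [hfuneq]
      _ = ∫ ω', (μ[(fun ω' => X i ω' j k) * Y i | m]) ω' ∂μ := (integral_condExp hm).symm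
      _ = ∫ ω', ((fun ω' => X i ω' j k) * μ[Y i | m]) ω' ∂μ := integral_congr_ae h1
      _ = ∫ ω', tip A0 (X i ω') * X i ω' j k ∂μ := by
          refine integral_congr_ae ?_
          filter_upwards [hmodel i] with ω' hω'
          simp only [Pi.mul_apply]
          rw [hω', mul_comm]
  -- consequence: ⟨E(YᵢXᵢ), C⟩ = E(⟨A₀,Xᵢ⟩⟨C,Xᵢ⟩)
  have hmeanTip : ∀ (i : Fin n) (C : Matrix (Fin m1) (Fin m2) ℝ),
      tip (meanYX μ X Y i) C = ∫ ω', tip A0 (X i ω') * tip C (X i ω') ∂μ := by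
    intro i C
    have hI : ∀ (j : Fin m1) (k : Fin m2),
        Integrable (fun ω' => tip A0 (X i ω') * X i ω' j k * C j k) μ :=
      fun j k => (hA0Xint i j k).mul_const _
    have happly : ∀ (j : Fin m1) (k : Fin m2),
        meanYX μ X Y i j k = ∫ ω', tip A0 (X i ω') * X i ω' j k ∂μ := fun j k => hmean i j k
    calc tip (meanYX μ X Y i) C = ∑ j, ∑ k, meanYX μ X Y i j k * C j k := tip_eq_sum _ _
      _ = ∑ j, ∑ k, ∫ ω', tip A0 (X i ω') * X i ω' j k * C j k ∂μ := by
          refine Finset.sum_congr rfl fun j _ => Finset.sum_congr rfl fun k _ => ?_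
          rw [happly j k, ← integral_mul_const]
      _ = ∑ j, ∫ ω', ∑ k, tip A0 (X i ω') * X i ω' j k * C j k ∂μ := by
          refine Finset.sum_congr rfl fun j _ => ?_
          exact (integral_finset_sum _ fun k _ => hI j k).symm
      _ = ∫ ω', ∑ j, ∑ k, tip A0 (X i ω') * X i ω' j k * C j k ∂μ := by
          exact (integral_finset_sum _ fun j _ =>
            integrable_finset_sum _ fun k _ => hI j k).symm
      _ = ∫ ω', tip A0 (X i ω') * tip C (X i ω') ∂μ := by
          refine integral_congr_ae (Filter.Eventually.of_forall fun ω' => ?_)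
          dsimp only
          rw [tip_eq_sum C (X i ω'), Finset.mul_sum]
          refine Finset.sum_congr rfl fun j _ => ?_
          rw [Finset.mul_sum]
          exact Finset.sum_congr rfl fun k _ => by ring
  -- abbreviation for the cross term
  set cr : Matrix (Fin m1) (Fin m2) ℝ → ℝ :=
    fun C => (1 / (n : ℝ)) * ∑ i, ∫ ω', tip A0 (X i ω') * tip C (X i ω') ∂μ with hcrdef
  -- expansion of the quadratic
  have hexpand : ∀ C : Matrix (Fin m1) (Fin m2) ℝ,
      l2sq μ X (C - A0) = l2sq μ X C - 2 * cr C + l2sq μ X A0 := by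
    intro C
    have hint : ∀ i : Fin n, ∫ ω', (tip (C - A0) (X i ω')) ^ 2 ∂μ
        = ∫ ω', (tip C (X i ω')) ^ 2 ∂μ
          - 2 * ∫ ω', tip A0 (X i ω') * tip C (X i ω') ∂μ
          + ∫ ω', (tip A0 (X i ω')) ^ 2 ∂μ := by
      intro i
      have h1 : (fun ω' => (tip (C - A0) (X i ω')) ^ 2)
          = fun ω' => ((tip C (X i ω')) ^ 2 - 2 * (tip A0 (X i ω') * tip C (X i ω')))
              + (tip A0 (X i ω')) ^ 2 := by
        funext ω'; rw [tip_sub_left]; ring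
      have hInt1 : Integrable (fun ω' => (tip C (X i ω')) ^ 2
          - 2 * (tip A0 (X i ω') * tip C (X i ω'))) μ :=
        (hL2int C i).sub ((hprod A0 C i).const_mul 2)
      rw [h1, integral_add hInt1 (hL2int A0 i),
        integral_sub (hL2int C i) ((hprod A0 C i).const_mul 2), integral_const_mul]
    simp only [l2sq, hcrdef]
    rw [Finset.sum_congr rfl fun i _ => hint i]
    rw [Finset.sum_add_distrib, Finset.sum_sub_distrib, ← Finset.mul_sum]
    ring
  -- the data term splits into noise + signal
  have hdata : ∀ C : Matrix (Fin m1) (Fin m2) ℝ,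
      tip ((2 / (n : ℝ)) • ∑ i, Y i ω • X i ω) C = 2 * tip M C + 2 * cr C := by
    intro C
    have h1 : tip ((2 / (n : ℝ)) • ∑ i, Y i ω • X i ω) C
        = (2 / (n : ℝ)) * ∑ i, Y i ω * tip (X i ω) C := by
      rw [tip_smul_left, tip_sum_left]
      congr 1
      exact Finset.sum_congr rfl fun i _ => tip_smul_left _ _ _
    have h2 : tip M C = (n : ℝ)⁻¹ * ∑ i,
        (Y i ω * tip (X i ω) C - ∫ ω', tip A0 (X i ω') * tip C (X i ω') ∂μ) := by
      rw [hMdef]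
      unfold errM
      rw [tip_smul_left, tip_sum_left]
      congr 1
      refine Finset.sum_congr rfl fun i _ => ?_
      rw [tip_sub_left, tip_smul_left, hmeanTip]
    have hn' : (n : ℝ) ≠ 0 := Nat.cast_ne_zero.2 hn.ne'
    rw [h1, h2, hcrdef, Finset.sum_sub_distrib]
    field_simp
    ring
  -- duality bounds on the noise terms
  have hb1 : 2 * tip M Ahat ≤ lam * nuc Ahat := by
    have h := tip_le_opnorm_mul_nuc M Ahat
    have h2 := mul_le_mul_of_nonneg_right hlam (nuc_nonneg Ahat)
    nlinarith [nuc_nonneg Ahat]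
  have hb2 : -(2 * tip M A) ≤ lam * nuc A := by
    have h := tip_le_opnorm_mul_nuc (-M) A
    rw [tip_neg_left, opnorm_neg] at h
    have h2 := mul_le_mul_of_nonneg_right hlam (nuc_nonneg A)
    nlinarith [nuc_nonneg A]
  -- combine with the minimality of Â
  have hmin := hAhatmin A hA
  unfold Ln at hmin
  rw [hdata Ahat, hdata A] at hmin
  rw [hexpand Ahat, hexpand A]
  linarith [hmin, hb1, hb2]

end
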